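/- arXiv:2602.05494 — 6 statements merged into one kernel-verified Lean document; each statement's English description precedes it below -/
import Mathlib

section
/- Let l, u, A ∈ ℝ with l < 1 < u. Define F : ℝ → ℝ by F(w) = min(w·A, (max l (min w u))·A) (the ratio-clipped PPO surrogate with clipping range [l,u]) and G : ℝ → ℝ by G(w) = min(w·A, (if l ≤ w ∧ w ≤ u then w else 1)·A) (the general-clipping surrogate that reverts to the old-policy ratio value 1 when the constraint l ≤ w ≤ u fails). Then for every w ∈ ℝ with w ≠ l and w ≠ u, both F and G are differentiable at w and their derivatives at w are equal. -/
private lemma grad_aux {F G f g : ℝ → ℝ} {w : ℝ}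
    (hf : DifferentiableAt ℝ f w) (hg : DifferentiableAt ℝ g w)
    (h1 : F =ᶠ[nhds w] f) (h2 : G =ᶠ[nhds w] g) (hd : deriv f w = deriv g w) :
    DifferentiableAt ℝ F w ∧ DifferentiableAt ℝ G w ∧ deriv F w = deriv G w :=
  ⟨hf.congr_of_eventuallyEq h1, hg.congr_of_eventuallyEq h2, by
    rw [h1.deriv_eq, h2.deriv_eq, hd]⟩

/-- Gradient equivalence of the ratio-clipped PPO surrogate and the
general-clipping surrogate (pointwise, per-sample form). -/
theorem gradient_equivalence (l u A : ℝ) (hl : l < 1) (hu : 1 < u)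
    (F G : ℝ → ℝ)
    (hF : F = fun w => min (w * A) ((max l (min w u)) * A))
    (hG : G = fun w => min (w * A) ((if l ≤ w ∧ w ≤ u then w else 1) * A)) :
    ∀ w : ℝ, w ≠ l → w ≠ u →
      DifferentiableAt ℝ F w ∧ DifferentiableAt ℝ G w ∧ deriv F w = deriv G w := by
  subst hF hG
  intro w hwl hwu
  have hid : DifferentiableAt ℝ (fun x : ℝ => x * A) w :=
    differentiableAt_id.mul_const A
  rcases lt_trichotomy w l with h1 | h1 | h1
  · -- w < l
    rcases le_or_gt 0 A with hA | hA
    · refine grad_aux hid hid ?_ ?_ rfl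
      · filter_upwards [eventually_lt_nhds h1] with x hx
        have hxu : x < u := hx.trans (hl.trans hu)
        rw [min_eq_left hxu.le, max_eq_left hx.le,
          min_eq_left (mul_le_mul_of_nonneg_right hx.le hA)]
      · filter_upwards [eventually_lt_nhds h1] with x hx
        rw [if_neg (fun h => absurd h.1 (not_le.mpr hx)),
          min_eq_left (by nlinarith : x * A ≤ 1 * A)]
    · refine grad_aux (differentiableAt_const (l * A)) (differentiableAt_const (1 * A))
        ?_ ?_ (by rw [deriv_const, deriv_const])
      · filter_upwards [eventually_lt_nhds h1] with x hx
        have hxu : x < u := hx.trans (hl.trans hu)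
        rw [min_eq_left hxu.le, max_eq_left hx.le,
          min_eq_right (by nlinarith : l * A ≤ x * A)]
      · filter_upwards [eventually_lt_nhds h1] with x hx
        rw [if_neg (fun h => absurd h.1 (not_le.mpr hx)),
          min_eq_right (by nlinarith : 1 * A ≤ x * A)]
  · exact absurd h1 hwl
  · rcases lt_trichotomy w u with h2 | h2 | h2
    · -- l < w < u
      refine grad_aux hid hid ?_ ?_ rfl
      · filter_upwards [eventually_gt_nhds h1, eventually_lt_nhds h2] with x hxl hxu
        rw [min_eq_left hxu.le, max_eq_right hxl.le, min_self]
      · filter_upwards [eventually_gt_nhds h1, eventually_lt_nhds h2] with x hxl hxu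
        rw [if_pos ⟨hxl.le, hxu.le⟩, min_self]
    · exact absurd h2 hwu
    · -- u < w
      rcases le_or_gt 0 A with hA | hA
      · refine grad_aux (differentiableAt_const (u * A)) (differentiableAt_const (1 * A))
          ?_ ?_ (by rw [deriv_const, deriv_const])
        · filter_upwards [eventually_gt_nhds h2] with x hx
          have hxl : l < x := (hl.trans hu).trans hx
          rw [min_eq_right hx.le, max_eq_right (hl.trans hu).le,
            min_eq_right (by nlinarith : u * A ≤ x * A)]
        · filter_upwards [eventually_gt_nhds h2] with x hx
          rw [if_neg (fun h => absurd h.2 (not_le.mpr hx)),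
            min_eq_right (by nlinarith : 1 * A ≤ x * A)]
      · refine grad_aux hid hid ?_ ?_ rfl
        · filter_upwards [eventually_gt_nhds h2] with x hx
          rw [min_eq_right hx.le, max_eq_right (hl.trans hu).le,
            min_eq_left (by nlinarith : x * A ≤ u * A)]
        · filter_upwards [eventually_gt_nhds h2] with x hx
          rw [if_neg (fun h => absurd h.2 (not_le.mpr hx)),
            min_eq_left (by nlinarith : x * A ≤ 1 * A)]
end

section
/- Define kl3 : ℝ → ℝ by kl3(x) = x − 1 − Real.log x. Let δ > 0 and let l, u ∈ ℝ satisfy 0 < l < 1 < u, kl3(l) = δ and kl3(u) = δ. Then for every x > 0, the constraint kl3(x) ≤ δ holds if and only if l ≤ x ≤ u. -/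
noncomputable def kl3 (x : ℝ) : ℝ := x - 1 - Real.log x

lemma kl3_anti : StrictAntiOn kl3 (Set.Ioc 0 1) := by
  apply strictAntiOn_of_deriv_neg (convex_Ioc 0 1)
  · exact (continuousOn_id.sub continuousOn_const).sub
      (Real.continuousOn_log.mono (fun x hx => ne_of_gt hx.1))
  · intro x hx
    rw [interior_Ioc] at hx
    have hx0 : (0:ℝ) < x := hx.1
    have : HasDerivAt kl3 (1 - 1/x) x := by
      have h := ((hasDerivAt_id x).sub_const 1).sub (Real.hasDerivAt_log hx0.ne'); rw [one_div]; exact h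
    rw [this.deriv]
    have : 1 < 1/x := by rw [lt_div_iff₀ hx0]; simpa using hx.2
    linarith

lemma kl3_mono : StrictMonoOn kl3 (Set.Ici 1) := by
  apply strictMonoOn_of_deriv_pos (convex_Ici 1)
  · exact (continuousOn_id.sub continuousOn_const).sub
      (Real.continuousOn_log.mono (fun x hx => by
        exact ne_of_gt (lt_of_lt_of_le one_pos hx)))
  · intro x hx
    rw [interior_Ici] at hx
    have hx0 : (0:ℝ) < x := lt_trans one_pos hx
    have : HasDerivAt kl3 (1 - 1/x) x := by
      have h := ((hasDerivAt_id x).sub_const 1).sub (Real.hasDerivAt_log hx0.ne'); rw [one_div]; exact h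
    rw [this.deriv]
    have : 1/x < 1 := by rw [div_lt_iff₀ hx0]; simpa using hx
    linarith

/-- The KL3-based trust-region constraint is equivalent to ratio-based clipping
with ranges [l, u]. -/
theorem kl3_constraint_iff_clipping (δ l u : ℝ) (hδ : 0 < δ)
    (hl0 : 0 < l) (hl1 : l < 1) (hu : 1 < u)
    (hkl : kl3 l = δ) (hku : kl3 u = δ) :
    ∀ x : ℝ, 0 < x → (kl3 x ≤ δ ↔ l ≤ x ∧ x ≤ u) := by
  intro x hx
  have hlmem : l ∈ Set.Ioc (0:ℝ) 1 := ⟨hl0, hl1.le⟩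
  have humem : u ∈ Set.Ici (1:ℝ) := hu.le
  constructor
  · intro h
    constructor
    · by_contra hc
      push_neg at hc
      have := kl3_anti ⟨hx, (hc.trans hl1).le⟩ hlmem hc
      linarith
    · by_contra hc
      push_neg at hc
      have := kl3_mono humem (le_of_lt (hu.trans hc) : x ∈ Set.Ici 1) hc
      linarith
  · rintro ⟨h1, h2⟩
    rcases le_total x 1 with hx1 | hx1
    · rcases eq_or_lt_of_le h1 with rfl | h1
      · exact hkl.le
      · have := (kl3_anti hlmem ⟨hx, hx1⟩ h1).le
        linarith
    · rcases eq_or_lt_of_le h2 with rfl | h2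
      · exact hku.le
      · have := (kl3_mono (Set.mem_Ici.2 hx1) humem h2).le
        linarith
end

section
/- Let α be a nonempty finite type, θ : α → ℝ, and g : α → ℝ. Define the softmax policy π_θ(b) = Real.exp(θ b) / ∑_{b'} Real.exp(θ b'). Then for every a ∈ α, the function t ↦ ∑_{a'} softmax(θ + t • Pi.single a 1)(a') · g(a') has derivative at t = 0 equal to π_θ(a) · (g(a) − ∑_{a'} π_θ(a') · g(a')). -/
open Finset

noncomputable def softmax {α : Type*} [Fintype α] (θ : α → ℝ) (b : α) : ℝ :=
  Real.exp (θ b) / ∑ b' : α, Real.exp (θ b')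

/-- Gradient of the IS-weighted surrogate objective with respect to a single logit. -/
theorem softmax_expectation_partial_deriv {α : Type*} [Fintype α] [Nonempty α]
    [DecidableEq α] (θ : α → ℝ) (g : α → ℝ) (a : α) :
    HasDerivAt (fun t : ℝ => ∑ a' : α, softmax (θ + t • (Pi.single a 1 : α → ℝ)) a' * g a')
      (softmax θ a * (g a - ∑ a' : α, softmax θ a' * g a')) 0 := by
  have hNpos : (0:ℝ) < ∑ b' : α, Real.exp (θ b') :=
    Finset.sum_pos (fun _ _ => Real.exp_pos _) Finset.univ_nonempty
  set N := ∑ b' : α, Real.exp (θ b') with hNdef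
  -- derivative of each exponential term
  have hterm : ∀ (h : α → ℝ) (b : α), HasDerivAt (fun t : ℝ => Real.exp (θ b + t * ((Pi.single a 1 : α → ℝ) b)) * h b)
      (((Pi.single a 1 : α → ℝ) b) * Real.exp (θ b) * h b) 0 := by
    intro h b
    have h1 : HasDerivAt (fun t : ℝ => θ b + t * ((Pi.single a 1 : α → ℝ) b)) (((Pi.single a 1 : α → ℝ) b)) 0 := by
      simpa using ((hasDerivAt_id (0:ℝ)).mul_const (((Pi.single a 1 : α → ℝ) b))).const_add (θ b)
    have := (h1.exp).mul_const (h b)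
    simpa [mul_comm, mul_assoc, mul_left_comm] using this
  have hsum : ∀ (h : α → ℝ), HasDerivAt (fun t : ℝ => ∑ b : α, Real.exp (θ b + t * ((Pi.single a 1 : α → ℝ) b)) * h b)
      (Real.exp (θ a) * h a) 0 := by
    intro h
    have := HasDerivAt.fun_sum (fun b (_ : b ∈ Finset.univ) => hterm h b)
    have he : ∑ b : α, ((Pi.single a 1 : α → ℝ) b) * Real.exp (θ b) * h b = Real.exp (θ a) * h a := by
      rw [Finset.sum_eq_single a]
      · simp
      · intro b _ hb; simp [Pi.single_apply, hb]
      · simp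
    rwa [he] at this
  have hS := hsum g
  have hNder : HasDerivAt (fun t : ℝ => ∑ b : α, Real.exp (θ b + t * ((Pi.single a 1 : α → ℝ) b)))
      (Real.exp (θ a)) 0 := by
    have := hsum 1
    simpa using this
  have hne : (∑ b : α, Real.exp (θ b + 0 * ((Pi.single a 1 : α → ℝ) b))) ≠ 0 := by
    simp only [zero_mul, add_zero]
    exact ne_of_gt hNpos
  have hdiv := hS.div hNder hne
  have hfun : (fun t : ℝ => ∑ a' : α, softmax (θ + t • (Pi.single a 1 : α → ℝ)) a' * g a')
      = fun t : ℝ => (∑ b : α, Real.exp (θ b + t * ((Pi.single a 1 : α → ℝ) b)) * g b) /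
          (∑ b : α, Real.exp (θ b + t * ((Pi.single a 1 : α → ℝ) b))) := by
    funext t
    rw [Finset.sum_div]
    refine Finset.sum_congr rfl fun b _ => ?_
    simp [softmax, div_mul_eq_mul_div]
  rw [hfun]
  convert hdiv using 1
  · rfl
  · rfl
  · rfl
  have hE : ∑ a' : α, softmax θ a' * g a' = (∑ a' : α, Real.exp (θ a') * g a') / N := by
    rw [Finset.sum_div]
    exact Finset.sum_congr rfl fun b _ => by simp [softmax, div_mul_eq_mul_div]; rfl
  rw [hE]
  simp only [zero_mul, add_zero, ← hNdef, softmax]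
  have hN0 : N ≠ 0 := ne_of_gt hNpos
  field_simp
end

section
/- Let α be a nonempty finite type and θ : α → ℝ. Define the softmax policy π_θ(b) = Real.exp(θ b) / ∑_{b'} Real.exp(θ b') and the entropy H(θ) = −∑_b π_θ(b) · Real.log(π_θ(b)). Then for every a ∈ α, the function t ↦ H(θ + t • Pi.single a 1) has derivative at t = 0 equal to −π_θ(a) · (Real.log(π_θ(a)) + H(θ)). -/
open Finset

noncomputable def softmaxEntropy {α : Type*} [Fintype α] (θ : α → ℝ) : ℝ :=
  -∑ b : α, softmax θ b * Real.log (softmax θ b)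

/-- Entropy gradient: ∂H(θ)/∂θ_a = −π_θ(a)·(log π_θ(a) + H(θ)). -/
theorem softmax_entropy_partial_deriv {α : Type*} [Fintype α] [Nonempty α]
    [DecidableEq α] (θ : α → ℝ) (a : α) :
    HasDerivAt (fun t : ℝ => softmaxEntropy (θ + t • (Pi.single a 1 : α → ℝ)))
      (-(softmax θ a) * (Real.log (softmax θ a) + softmaxEntropy θ)) 0 := by
  set d : α → ℝ := Pi.single a 1 with hd
  set Z : ℝ → ℝ := fun t => ∑ b : α, Real.exp (θ b + t * d b) with hZdef
  set S : ℝ → ℝ := fun t => ∑ b : α, (θ b + t * d b) * Real.exp (θ b + t * d b) with hSdef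
  have hZpos : ∀ t : ℝ, 0 < Z t := fun t =>
    Finset.sum_pos (fun b _ => Real.exp_pos _) Finset.univ_nonempty
  have key : ∀ t : ℝ, softmaxEntropy (θ + t • d) = Real.log (Z t) - S t / Z t := by
    intro t
    have happ : ∀ b, (θ + t • d) b = θ b + t * d b := fun b => rfl
    have hsm : ∀ b, softmax (θ + t • d) b = Real.exp (θ b + t * d b) / Z t := by
      intro b
      simp only [softmax, happ, hZdef]
    have hlog : ∀ b, Real.log (softmax (θ + t • d) b) = (θ b + t * d b) - Real.log (Z t) := by
      intro b
      rw [hsm, Real.log_div (Real.exp_ne_zero _) (hZpos t).ne', Real.log_exp]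
    have hterm : ∀ b, softmax (θ + t • d) b * Real.log (softmax (θ + t • d) b)
        = ((θ b + t * d b) * Real.exp (θ b + t * d b)
          - Real.log (Z t) * Real.exp (θ b + t * d b)) / Z t := by
      intro b
      rw [hlog, hsm]
      field_simp
    rw [softmaxEntropy]
    rw [Finset.sum_congr rfl (fun b _ => hterm b)]
    rw [← Finset.sum_div, Finset.sum_sub_distrib, ← Finset.mul_sum]
    rw [sub_div, mul_div_assoc, div_self (hZpos t).ne']
    ring
  have hx : ∀ b : α, HasDerivAt (fun t : ℝ => θ b + t * d b) (d b) 0 := by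
    intro b
    simpa using ((hasDerivAt_id (0:ℝ)).mul_const (d b)).const_add (θ b)
  have hZ : HasDerivAt Z (Real.exp (θ a)) 0 := by
    have := HasDerivAt.fun_sum (u := (Finset.univ : Finset α))
      (fun b _ => ((hx b).exp : HasDerivAt (fun t => Real.exp (θ b + t * d b))
        (Real.exp (θ b + 0 * d b) * d b) 0))
    have hsum : ∑ b : α, Real.exp (θ b + 0 * d b) * d b = Real.exp (θ a) := by
      simp [hd, Pi.single_apply, mul_ite]
    rw [hsum] at this
    exact this
  have hS : HasDerivAt S (Real.exp (θ a) * (1 + θ a)) 0 := by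
    have := HasDerivAt.fun_sum (u := (Finset.univ : Finset α))
      (fun b _ => ((hx b).mul (hx b).exp))
    have hsum : ∑ b : α, (d b * Real.exp (θ b + 0 * d b)
        + (θ b + 0 * d b) * (Real.exp (θ b + 0 * d b) * d b))
        = Real.exp (θ a) * (1 + θ a) := by
      simp [hd, Pi.single_apply, mul_ite, ite_mul, Finset.sum_add_distrib]
      ring
    rw [hsum] at this
    exact this
  have hF : HasDerivAt (fun t => Real.log (Z t) - S t / Z t)
      (Real.exp (θ a) / Z 0 -
        (Real.exp (θ a) * (1 + θ a) * Z 0 - S 0 * Real.exp (θ a)) / (Z 0)^2) 0 :=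
    (hZ.log (hZpos 0).ne').sub (hS.div hZ (hZpos 0).ne')
  have heq : (fun t : ℝ => softmaxEntropy (θ + t • d)) = fun t => Real.log (Z t) - S t / Z t :=
    funext key
  rw [heq]
  convert hF using 1
  have hZ0 : Z 0 = ∑ b' : α, Real.exp (θ b') := by simp [hZdef]
  have hsma : softmax θ a = Real.exp (θ a) / Z 0 := by rw [softmax, hZ0]
  have hloga : Real.log (softmax θ a) = θ a - Real.log (Z 0) := by
    rw [hsma, Real.log_div (Real.exp_ne_zero _) (hZpos 0).ne', Real.log_exp]
  have hH : softmaxEntropy θ = Real.log (Z 0) - S 0 / Z 0 := by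
    have := key 0
    simpa using this
  rw [hloga, hH, hsma]
  have h0 := (hZpos 0).ne'
  field_simp
  ring
end

section
/- Let α be a nonempty finite type, θ : α → ℝ, g : α → ℝ, and η, d ∈ ℝ. Define the softmax policy π_θ(b) = Real.exp(θ b) / ∑_{b'} Real.exp(θ b'), the mean E_{π_θ}[g] = ∑_b π_θ(b)·g(b), the entropy H(φ) = −∑_b π_φ(b)·Real.log(π_φ(b)), and the logit-update difference Δθ : α → ℝ by Δθ(a) = −η·d·π_θ(a)·(g(a) − E_{π_θ}[g]). Then the function t ↦ H(θ + t • Δθ) has derivative at t = 0 equal to η·d·∑_a π_θ(a)² · (g(a) − E_{π_θ}[g]) · (Real.log(π_θ(a)) − E_{π_θ}[Real.log ∘ π_θ]). -/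
open Finset

lemma entropy_rewrite {α : Type*} [Fintype α] [Nonempty α] (φ : α → ℝ) :
    softmaxEntropy φ =
      Real.log (∑ b : α, Real.exp (φ b)) -
        (∑ b : α, Real.exp (φ b) * φ b) / (∑ b : α, Real.exp (φ b)) := by
  have hZ : (0:ℝ) < ∑ b : α, Real.exp (φ b) :=
    Finset.sum_pos (fun b _ => Real.exp_pos _) Finset.univ_nonempty
  unfold softmaxEntropy softmax
  have h : ∀ b : α, Real.exp (φ b) / (∑ b' : α, Real.exp (φ b')) *
      Real.log (Real.exp (φ b) / (∑ b' : α, Real.exp (φ b'))) =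
      Real.exp (φ b) * φ b / (∑ b' : α, Real.exp (φ b')) -
      Real.exp (φ b) * Real.log (∑ b' : α, Real.exp (φ b')) / (∑ b' : α, Real.exp (φ b')) := by
    intro b
    rw [Real.log_div (Real.exp_ne_zero _) hZ.ne', Real.log_exp]
    ring
  rw [Finset.sum_congr rfl (fun b _ => h b), Finset.sum_sub_distrib,
    ← Finset.sum_div, ← Finset.sum_div, ← Finset.sum_mul]
  have : (∑ b : α, Real.exp (φ b)) * Real.log (∑ b' : α, Real.exp (φ b')) /
      (∑ b' : α, Real.exp (φ b')) = Real.log (∑ b' : α, Real.exp (φ b')) := by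
    field_simp
  rw [this]
  ring

lemma entropy_hasDerivAt {α : Type*} [Fintype α] [Nonempty α] (θ v : α → ℝ) :
    HasDerivAt (fun t : ℝ => softmaxEntropy (θ + t • v))
      ((∑ b : α, Real.exp (θ b) * θ b) * (∑ b : α, v b * Real.exp (θ b)) /
          (∑ b : α, Real.exp (θ b)) ^ 2
        - (∑ b : α, v b * Real.exp (θ b) * θ b) / (∑ b : α, Real.exp (θ b))) 0 := by
  have hZ : (0:ℝ) < ∑ b : α, Real.exp (θ b) :=
    Finset.sum_pos (fun b _ => Real.exp_pos _) Finset.univ_nonempty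
  have hx : ∀ b : α, HasDerivAt (fun t : ℝ => θ b + t * v b) (v b) 0 := by
    intro b
    simpa using (hasDerivAt_mul_const (v b)).const_add (θ b)
  have hZd : HasDerivAt (fun t : ℝ => ∑ b : α, Real.exp (θ b + t * v b))
      (∑ b : α, Real.exp (θ b) * v b) 0 := by
    refine HasDerivAt.fun_sum fun b _ => ?_
    simpa using (hx b).exp
  have hSd : HasDerivAt (fun t : ℝ => ∑ b : α, Real.exp (θ b + t * v b) * (θ b + t * v b))
      (∑ b : α, (Real.exp (θ b) * v b * θ b + Real.exp (θ b) * v b)) 0 := by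
    refine HasDerivAt.fun_sum fun b _ => ?_
    simpa using ((hx b).exp.fun_mul (hx b))
  have hZ0 : (∑ b : α, Real.exp (θ b + (0:ℝ) * v b)) = ∑ b : α, Real.exp (θ b) := by simp
  have hZne : (∑ b : α, Real.exp (θ b + (0:ℝ) * v b)) ≠ 0 := by
    rw [hZ0]; exact hZ.ne'
  have key := (hZd.log hZne).fun_sub (hSd.fun_div hZd hZne)
  have heq : (fun t : ℝ =>
      Real.log (∑ b : α, Real.exp (θ b + t * v b)) -
        (∑ b : α, Real.exp (θ b + t * v b) * (θ b + t * v b)) /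
          (∑ b : α, Real.exp (θ b + t * v b))) =
      fun t : ℝ => softmaxEntropy (θ + t • v) := by
    funext t
    rw [entropy_rewrite]
    simp [Pi.add_apply]
  rw [heq] at key
  refine key.congr_deriv (Eq.symm ?_)
  rw [hZ0, Finset.sum_add_distrib]
  have hc : (∑ b : α, v b * Real.exp (θ b)) = ∑ b : α, Real.exp (θ b) * v b := by
    exact Finset.sum_congr rfl fun b _ => mul_comm _ _
  have hc2 : (∑ b : α, v b * Real.exp (θ b) * θ b) = ∑ b : α, Real.exp (θ b) * v b * θ b := by
    refine Finset.sum_congr rfl fun b _ => by ring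
  rw [hc, hc2]
  have hS0 : (∑ b : α, Real.exp (θ b + (0:ℝ) * v b) * (θ b + (0:ℝ) * v b)) =
      ∑ b : α, Real.exp (θ b) * θ b := by simp
  rw [hS0]
  field_simp
  ring

/-- Entropy Difference: the first-order entropy change along the logit-update
difference equals η·d times a π-weighted covariance-type sum between the
event-restricted advantage g and the log-likelihood log π_θ. -/
theorem entropy_difference {α : Type*} [Fintype α] [Nonempty α] (θ : α → ℝ)
    (g : α → ℝ) (η d : ℝ) (Δθ : α → ℝ)
    (hΔθ : Δθ = fun a =>
      -η * d * softmax θ a * (g a - ∑ b : α, softmax θ b * g b)) :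
    HasDerivAt (fun t : ℝ => softmaxEntropy (θ + t • Δθ))
      (η * d * ∑ a : α, (softmax θ a) ^ 2 * (g a - ∑ b : α, softmax θ b * g b) *
        (Real.log (softmax θ a) - ∑ a' : α, softmax θ a' * Real.log (softmax θ a')))
      0 := by
  have hZ : (0:ℝ) < ∑ b : α, Real.exp (θ b) :=
    Finset.sum_pos (fun b _ => Real.exp_pos _) Finset.univ_nonempty
  set Z : ℝ := ∑ b : α, Real.exp (θ b) with hZdef
  set E : ℝ := ∑ b : α, softmax θ b * g b with hEdef
  set A : ℝ := ∑ b : α, Real.exp (θ b) * θ b with hAdef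
  set P : ℝ := ∑ b : α, Real.exp (θ b) ^ 2 * (g b - E) with hPdef
  set Q : ℝ := ∑ b : α, Real.exp (θ b) ^ 2 * (g b - E) * θ b with hQdef
  have hlog : ∀ a : α, Real.log (softmax θ a) = θ a - Real.log Z := by
    intro a
    rw [softmax, Real.log_div (Real.exp_ne_zero _) hZ.ne', Real.log_exp]
  have hpl : (∑ a' : α, softmax θ a' * Real.log (softmax θ a')) = A / Z - Real.log Z := by
    have h : ∀ a : α, softmax θ a * Real.log (softmax θ a) =
        Real.exp (θ a) * θ a / Z - Real.exp (θ a) * Real.log Z / Z := by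
      intro a
      rw [hlog a, softmax]
      ring
    rw [Finset.sum_congr rfl fun a _ => h a, Finset.sum_sub_distrib,
      ← Finset.sum_div, ← Finset.sum_div, ← Finset.sum_mul]
    have : Z * Real.log Z / Z = Real.log Z := by field_simp
    rw [← hAdef, ← hZdef, this]
  have h1 : (∑ b : α, Δθ b * Real.exp (θ b)) = -(η * d) * P / Z := by
    have h : ∀ b : α, Δθ b * Real.exp (θ b) =
        -(η * d) * (Real.exp (θ b) ^ 2 * (g b - E)) / Z := by
      intro b
      rw [hΔθ]
      simp only [softmax, ← hZdef, ← hEdef]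
      field_simp
    rw [Finset.sum_congr rfl fun b _ => h b, ← Finset.sum_div, ← Finset.mul_sum, ← hPdef]
  have h2 : (∑ b : α, Δθ b * Real.exp (θ b) * θ b) = -(η * d) * Q / Z := by
    have h : ∀ b : α, Δθ b * Real.exp (θ b) * θ b =
        -(η * d) * (Real.exp (θ b) ^ 2 * (g b - E) * θ b) / Z := by
      intro b
      rw [hΔθ]
      simp only [softmax, ← hZdef, ← hEdef]
      field_simp
    rw [Finset.sum_congr rfl fun b _ => h b, ← Finset.sum_div, ← Finset.mul_sum, ← hQdef]
  have hT : (∑ a : α, (softmax θ a) ^ 2 * (g a - E) *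
      (Real.log (softmax θ a) - ∑ a' : α, softmax θ a' * Real.log (softmax θ a'))) =
      (Q - A / Z * P) / Z ^ 2 := by
    have h : ∀ a : α, (softmax θ a) ^ 2 * (g a - E) *
        (Real.log (softmax θ a) - ∑ a' : α, softmax θ a' * Real.log (softmax θ a')) =
        (Real.exp (θ a) ^ 2 * (g a - E) * θ a -
          A / Z * (Real.exp (θ a) ^ 2 * (g a - E))) / Z ^ 2 := by
      intro a
      rw [hpl, hlog a, softmax, ← hZdef]
      field_simp
      ring
    rw [Finset.sum_congr rfl fun a _ => h a, ← Finset.sum_div, Finset.sum_sub_distrib,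
      ← Finset.mul_sum, ← hQdef, ← hPdef]
  have hD : η * d * ∑ a : α, (softmax θ a) ^ 2 * (g a - E) *
      (Real.log (softmax θ a) - ∑ a' : α, softmax θ a' * Real.log (softmax θ a')) =
      A * (∑ b : α, Δθ b * Real.exp (θ b)) / Z ^ 2
        - (∑ b : α, Δθ b * Real.exp (θ b) * θ b) / Z := by
    rw [hT, h1, h2]
    field_simp
    ring
  rw [hD]
  exact entropy_hasDerivAt θ Δθ
end

section
/- Define kl3 : ℝ → ℝ by kl3(x) = x − 1 − Real.log x. Let δ > 0 and let S = {x : ℝ | 0 < x ∧ kl3(x) ≤ δ}. Then sInf S and sSup S satisfy: 0 < sInf S < 1 < sSup S, kl3(sInf S) = δ, and kl3(sSup S) = δ. -/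
lemma kl3_hasDerivAt {x : ℝ} (hx : 0 < x) : HasDerivAt kl3 (1 - x⁻¹) x := by
  have h := ((hasDerivAt_id x).sub_const 1).sub (Real.hasDerivAt_log hx.ne')
  exact h

lemma kl3_continuousOn {s : Set ℝ} (hs : s ⊆ Set.Ioi 0) : ContinuousOn kl3 s := by
  intro x hx
  exact ((kl3_hasDerivAt (hs hx)).continuousAt).continuousWithinAt

lemma kl3_one : kl3 1 = 0 := by simp [kl3]

lemma kl3_log_bound {x : ℝ} (hx : 0 < x) : (Real.sqrt x - 1)^2 ≤ kl3 x := by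
  have hs : 0 < Real.sqrt x := Real.sqrt_pos.2 hx
  have hlog : Real.log (Real.sqrt x) ≤ Real.sqrt x - 1 :=
    Real.log_le_sub_one_of_pos hs
  rw [Real.log_sqrt hx.le] at hlog
  have hsq : Real.sqrt x ^ 2 = x := Real.sq_sqrt hx.le
  rw [kl3]
  nlinarith [hlog, hsq]

/-- The extrema of the KL3 trust region {x > 0 : kl3 x ≤ δ} lie on either side
of 1 and attain the divergence level δ exactly. -/
theorem kl3_trust_region_extrema (δ : ℝ) (hδ : 0 < δ)
    (S : Set ℝ) (hS : S = {x : ℝ | 0 < x ∧ kl3 x ≤ δ}) :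
    0 < sInf S ∧ sInf S < 1 ∧ 1 < sSup S ∧ kl3 (sInf S) = δ ∧ kl3 (sSup S) = δ := by
  -- lower crossing point
  set x₁ : ℝ := Real.exp (-(δ + 1)) with hx₁
  have hx₁pos : 0 < x₁ := Real.exp_pos _
  have hx₁lt : x₁ < 1 := by
    rw [hx₁, Real.exp_lt_one_iff]; linarith
  have hx₁val : δ < kl3 x₁ := by
    rw [kl3, hx₁, Real.log_exp]
    have := Real.exp_pos (-(δ + 1))
    linarith
  have hmem₁ : δ ∈ Set.Icc (kl3 1) (kl3 x₁) := ⟨by rw [kl3_one]; exact hδ.le, hx₁val.le⟩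
  obtain ⟨a, ha_mem, ha_eq⟩ :=
    intermediate_value_Icc' hx₁lt.le (kl3_continuousOn (by
      intro y hy; exact lt_of_lt_of_le hx₁pos hy.1)) hmem₁
  have ha_pos : 0 < a := lt_of_lt_of_le hx₁pos ha_mem.1
  have ha_lt : a < 1 := by
    rcases lt_or_eq_of_le ha_mem.2 with h | h
    · exact h
    · exfalso; rw [h, kl3_one] at ha_eq; linarith
  -- upper crossing point
  set x₂ : ℝ := (Real.sqrt δ + 2)^2 with hx₂
  have hsδ : 0 ≤ Real.sqrt δ := Real.sqrt_nonneg δ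
  have hx₂gt : 1 < x₂ := by nlinarith
  have hx₂val : δ < kl3 x₂ := by
    have hx₂pos : 0 < x₂ := lt_trans one_pos hx₂gt
    have hb := kl3_log_bound hx₂pos
    have hsq : Real.sqrt x₂ = Real.sqrt δ + 2 := by
      rw [hx₂, Real.sqrt_sq (by linarith)]
    rw [hsq] at hb
    have hδsq : Real.sqrt δ ^ 2 = δ := Real.sq_sqrt hδ.le
    nlinarith
  have hmem₂ : δ ∈ Set.Icc (kl3 1) (kl3 x₂) := ⟨by rw [kl3_one]; exact hδ.le, hx₂val.le⟩
  obtain ⟨b, hb_mem, hb_eq⟩ :=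
    intermediate_value_Icc hx₂gt.le (kl3_continuousOn (by
      intro y hy; exact lt_of_lt_of_le one_pos hy.1)) hmem₂
  have hb_gt : 1 < b := by
    rcases lt_or_eq_of_le hb_mem.1 with h | h
    · exact h
    · exfalso; rw [← h, kl3_one] at hb_eq; linarith
  have hab : a ≤ b := le_trans ha_lt.le hb_gt.le
  -- S = Icc a b
  have hS_eq : S = Set.Icc a b := by
    rw [hS]
    ext x
    constructor
    · rintro ⟨hx0, hxδ⟩
      constructor
      · by_contra hlt
        push_neg at hlt
        have hx1 : x ∈ Set.Ioc 0 1 := ⟨hx0, le_of_lt (lt_trans hlt ha_lt)⟩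
        have ha1 : a ∈ Set.Ioc 0 1 := ⟨ha_pos, ha_lt.le⟩
        have := kl3_anti hx1 ha1 hlt
        rw [ha_eq] at this
        linarith
      · by_contra hlt
        push_neg at hlt
        have hb1 : b ∈ Set.Ici (1:ℝ) := hb_gt.le
        have hx1 : x ∈ Set.Ici (1:ℝ) := le_of_lt (lt_trans hb_gt hlt)
        have := kl3_mono hb1 hx1 hlt
        rw [hb_eq] at this
        linarith
    · rintro ⟨hax, hxb⟩
      have hx0 : 0 < x := lt_of_lt_of_le ha_pos hax
      refine ⟨hx0, ?_⟩
      rcases le_total x 1 with h1 | h1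
      · have := kl3_anti.antitoneOn ⟨ha_pos, ha_lt.le⟩ ⟨hx0, h1⟩ hax
        rw [ha_eq] at this
        exact this
      · have := kl3_mono.monotoneOn h1 hb_gt.le hxb
        rw [hb_eq] at this
        exact this
  rw [hS_eq, csInf_Icc hab, csSup_Icc hab]
  exact ⟨ha_pos, ha_lt, hb_gt, ha_eq, hb_eq⟩
end
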